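/- (Goodwyn's variational inequality) Let X be a compact metric space, f : X → X a homeomorphism, and μ an f-invariant Borel probability measure on X. Then h_μ(f) ≤ h_top(f). -/

import Mathlib

open Filter MeasureTheory Set Topology
open scoped ENNReal NNReal

noncomputable section

/-- The entropy at time `n` of the finite measurable partition of `X` given by a map
`P : X → Fin m`, with respect to the dynamics `f`:
`−Σ_w μ(X_w) log μ(X_w)`, the sum being over all itineraries `w : Fin n → Fin m`,
where `X_w` is the set of points whose itinerary is `w`. -/
def partitionDynEntropy {X : Type*} [MeasurableSpace X] (μ : Measure X) (f : X → X)
    {m : ℕ} (P : X → Fin m) (n : ℕ) : ℝ :=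
  -∑ w : Fin n → Fin m,
      (μ {x | ∀ i : Fin n, P (f^[(i : ℕ)] x) = w i}).toReal *
        Real.log (μ {x | ∀ i : Fin n, P (f^[(i : ℕ)] x) = w i}).toReal

/-- The Kolmogorov–Sinai (metric) entropy of `f` with respect to `μ`: the supremum over
all finite measurable partitions of the asymptotic exponential rate of the partition
entropies. -/
def kolmogorovSinaiEntropy {X : Type*} [MeasurableSpace X] (μ : Measure X) (f : X → X) :
    EReal :=
  ⨆ (m : ℕ) (P : {P : X → Fin m // Measurable P}),
    Filter.atTop.liminf fun n : ℕ => ((partitionDynEntropy μ f P.1 n / n : ℝ) : EReal)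

/-- The minimal cardinality of a subcover of the `n`-th dynamical refinement
`𝒰 ∨ f⁻¹𝒰 ∨ … ∨ f^{-(n-1)}𝒰` of the cover `U`. -/
def coverMinCard {X : Type*} (f : X → X) {k : ℕ} (U : Fin k → Set X) (n : ℕ) : ℕ :=
  sInf {m | ∃ S : Finset (Fin n → Fin k), S.card = m ∧
    (Set.univ : Set X) ⊆ ⋃ w ∈ S, ⋂ i : Fin n, f^[(i : ℕ)] ⁻¹' U (w i)}

/-- The topological entropy of `f`: the supremum over finite open covers `𝒰` of the
exponential growth rate of the minimal cardinality of subcovers of the dynamical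
refinements of `𝒰`. -/
def topEntropy {X : Type*} [TopologicalSpace X] (f : X → X) : EReal :=
  ⨆ (k : ℕ)
    (U : {U : Fin k → Set X // (∀ i, IsOpen (U i)) ∧ ⋃ i, U i = Set.univ}),
    Filter.atTop.liminf fun n : ℕ =>
      ((Real.log (coverMinCard f U.1 n) / n : ℝ) : EReal)

end


/-- log is monotone on natural number casts. -/
lemma log_nat_mono {a b : ℕ} (h : a ≤ b) : Real.log a ≤ Real.log b := by
  rcases Nat.eq_zero_or_pos a with ha | ha
  · subst ha
    simp only [Nat.cast_zero, Real.log_zero]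
    rcases Nat.eq_zero_or_pos b with hb | hb
    · simp [hb]
    · exact Real.log_natCast_nonneg b
  · exact Real.log_le_log (by exact_mod_cast ha) (by exact_mod_cast h)

/-- Gibbs' inequality: entropy of a subprobability vector is at most
`-q log q + q log n` where `q` is the total mass and `n` the number of nonzero entries. -/
lemma gibbs_aux {ι : Type*} [DecidableEq ι] (t : Finset ι) (p : ι → ℝ)
    (h0 : ∀ i ∈ t, 0 ≤ p i) :
    ∑ i ∈ t, -(p i * Real.log (p i)) ≤
      -((∑ i ∈ t, p i) * Real.log (∑ i ∈ t, p i)) +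
        (∑ i ∈ t, p i) * Real.log ((t.filter fun i => p i ≠ 0).card) := by
  classical
  set q := ∑ i ∈ t, p i with hq
  set F := t.filter fun i => p i ≠ 0 with hF
  have hsumF : ∑ i ∈ F, p i = q := by
    rw [hq, hF]
    exact Finset.sum_filter_ne_zero t
  have hLHS : ∑ i ∈ t, -(p i * Real.log (p i)) = ∑ i ∈ F, -(p i * Real.log (p i)) := by
    rw [hF]
    refine (Finset.sum_filter_of_ne fun i hi hne => ?_).symm
    by_contra h
    exact hne (by simp [h])
  rcases eq_or_lt_of_le (Finset.sum_nonneg h0) with hq0 | hqpos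
  · -- q = 0 : all p i = 0
    have hall : ∀ i ∈ t, p i = 0 := by
      intro i hi
      exact (Finset.sum_eq_zero_iff_of_nonneg h0).1 hq0.symm i hi
    have : F = ∅ := by
      rw [hF, Finset.filter_eq_empty_iff]
      intro i hi; simp [hall i hi]
    have hq0' : q = 0 := by rw [hq, ← hq0]
    rw [hLHS, this, hq0']
    simp
  · -- q > 0
    have hFpos : ∀ i ∈ F, 0 < p i := by
      intro i hi
      rw [hF, Finset.mem_filter] at hi
      exact lt_of_le_of_ne (h0 i hi.1) (Ne.symm hi.2)
    have hn : 0 < (F.card : ℝ) := by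
      have : F.Nonempty := by
        by_contra h
        rw [Finset.not_nonempty_iff_eq_empty] at h
        rw [← hq, ← hsumF, h, Finset.sum_empty] at hqpos
        exact lt_irrefl _ hqpos
      exact_mod_cast Finset.card_pos.2 this
    rw [hLHS]
    have key : ∀ i ∈ F, -(p i * Real.log (p i)) ≤
        (q / F.card - p i) + p i * Real.log F.card - p i * Real.log q := by
      intro i hi
      have hpi := hFpos i hi
      have harg : 0 < q / (F.card * p i) := by positivity
      have hlog : Real.log (q / (F.card * p i)) ≤ q / (F.card * p i) - 1 :=
        Real.log_le_sub_one_of_pos harg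
      have hexp : Real.log (q / (F.card * p i)) =
          Real.log q - Real.log F.card - Real.log (p i) := by
        rw [Real.log_div (ne_of_gt hqpos) (by positivity), Real.log_mul (ne_of_gt hn) (ne_of_gt hpi)]
        ring
      have hmul := mul_le_mul_of_nonneg_left hlog (le_of_lt hpi)
      rw [hexp] at hmul
      have hsimp : p i * (q / (F.card * p i) - 1) = q / F.card - p i := by
        field_simp
      rw [hsimp] at hmul
      nlinarith [hmul]
    calc ∑ i ∈ F, -(p i * Real.log (p i))
        ≤ ∑ i ∈ F, ((q / F.card - p i) + p i * Real.log F.card - p i * Real.log q) :=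
          Finset.sum_le_sum key
      _ = (F.card * (q / F.card) - q) + q * Real.log F.card - q * Real.log q := by
          rw [Finset.sum_sub_distrib, Finset.sum_add_distrib, ← Finset.sum_mul,
            ← Finset.sum_mul, hsumF, Finset.sum_sub_distrib, Finset.sum_const, hsumF]
          simp [nsmul_eq_mul]
      _ = q * Real.log F.card - q * Real.log q := by
          field_simp
          ring
      _ = -(q * Real.log q) + q * Real.log F.card := by ring

/-- Entropy does not increase under coarsening (grouping) of a nonnegative vector. -/
lemma coarsen_entropy_le {ι κ : Type*} [Fintype ι] [Fintype κ] [DecidableEq κ]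
    (p : ι → ℝ) (h0 : ∀ i, 0 ≤ p i) (γ : ι → κ) (q : κ → ℝ)
    (hq : ∀ k, q k = ∑ i ∈ Finset.univ.filter (fun i => γ i = k), p i) :
    ∑ k, -(q k * Real.log (q k)) ≤ ∑ i, -(p i * Real.log (p i)) := by
  classical
  rw [← Finset.sum_fiberwise (Finset.univ) γ (fun i => -(p i * Real.log (p i)))]
  refine Finset.sum_le_sum fun k _ => ?_
  have hqk : q k = ∑ i ∈ Finset.univ.filter (fun i => γ i = k), p i := hq k
  have hqk0 : 0 ≤ q k := hqk ▸ Finset.sum_nonneg (fun i _ => h0 i)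
  have key : ∀ i ∈ Finset.univ.filter (fun i => γ i = k),
      p i * Real.log (q k) ≤ p i * Real.log (p i) → True := fun _ _ _ => trivial
  have step : ∀ i ∈ Finset.univ.filter (fun i => γ i = k),
      -(p i * Real.log (q k)) ≤ -(p i * Real.log (p i)) := by
    intro i hi
    rcases eq_or_lt_of_le (h0 i) with h | h
    · simp [← h]
    · have hple : p i ≤ q k := by
        rw [hqk]
        exact Finset.single_le_sum (fun j _ => h0 j) hi
      have : Real.log (p i) ≤ Real.log (q k) := Real.log_le_log h hple
      nlinarith
  calc -(q k * Real.log (q k))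
      = ∑ i ∈ Finset.univ.filter (fun i => γ i = k), -(p i * Real.log (q k)) := by
        simp only [Finset.sum_neg_distrib, ← Finset.sum_mul, ← hqk]
    _ ≤ ∑ i ∈ Finset.univ.filter (fun i => γ i = k), -(p i * Real.log (p i)) :=
        Finset.sum_le_sum step

/-- Grouping bound: entropy ≤ log(number of groups) + Σ_k (group mass) log (group support size). -/
lemma group_entropy_bound {ι κ : Type*} [Fintype ι] [Fintype κ] [DecidableEq ι] [DecidableEq κ]
    (p : ι → ℝ) (h0 : ∀ i, 0 ≤ p i) (hsum : ∑ i, p i = 1) (γ : ι → κ) :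
    ∑ i, -(p i * Real.log (p i)) ≤ Real.log (Fintype.card κ) +
      ∑ k, (∑ i ∈ Finset.univ.filter (fun i => γ i = k), p i) *
        Real.log (((Finset.univ.filter (fun i => γ i = k)).filter (fun i => p i ≠ 0)).card) := by
  classical
  set q : κ → ℝ := fun k => ∑ i ∈ Finset.univ.filter (fun i => γ i = k), p i with hqdef
  have hq0 : ∀ k, 0 ≤ q k := fun k => Finset.sum_nonneg fun i _ => h0 i
  have hqsum : ∑ k, q k = 1 := by
    rw [hqdef, Finset.sum_fiberwise (Finset.univ) γ p]
    exact hsum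
  -- fiberwise split
  rw [← Finset.sum_fiberwise (Finset.univ) γ (fun i => -(p i * Real.log (p i)))]
  have step1 : ∀ k ∈ Finset.univ,
      ∑ i ∈ Finset.univ.filter (fun i => γ i = k), -(p i * Real.log (p i)) ≤
        -(q k * Real.log (q k)) +
          q k * Real.log (((Finset.univ.filter (fun i => γ i = k)).filter
            (fun i => p i ≠ 0)).card) := by
    intro k _
    exact gibbs_aux _ p (fun i _ => h0 i)
  calc ∑ k, ∑ i ∈ Finset.univ.filter (fun i => γ i = k), -(p i * Real.log (p i))
      ≤ ∑ k, (-(q k * Real.log (q k)) +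
          q k * Real.log (((Finset.univ.filter (fun i => γ i = k)).filter
            (fun i => p i ≠ 0)).card)) := Finset.sum_le_sum step1
    _ = (∑ k, -(q k * Real.log (q k))) +
          ∑ k, q k * Real.log (((Finset.univ.filter (fun i => γ i = k)).filter
            (fun i => p i ≠ 0)).card) := Finset.sum_add_distrib
    _ ≤ Real.log (Fintype.card κ) + _ := by
        gcongr
        -- top-level gibbs
        have := gibbs_aux (Finset.univ : Finset κ) q (fun k _ => hq0 k)
        rw [hqsum] at this
        simp only [Real.log_one, mul_zero, neg_zero, one_mul, zero_add] at this
        refine this.trans ?_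
        exact log_nat_mono (Finset.card_filter_le _ _)

/-- Counting bound: the number of `(P,Q)`-itineraries compatible with a fixed cover word `w`
and having at most `s` zero positions is at most `θ^s (1+m/θ)^n`. -/
lemma count_compat_le {n m s : ℕ} (θ : ℝ) (hθ : 1 ≤ θ)
    (w : Fin n → Fin m) (V : Finset (Fin n → Fin m × Fin (m + 1)))
    (hV : ∀ v ∈ V, ((Finset.univ.filter fun i => (v i).2 = 0).card ≤ s) ∧
          ∀ i, (v i).2 = 0 ∨ v i = (w i, (w i).succ)) :
    (V.card : ℝ) ≤ θ ^ s * (1 + m / θ) ^ n := by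
  classical
  have hθ0 : 0 < θ := lt_of_lt_of_le one_pos hθ
  -- the injection into partial functions
  set φ : (Fin n → Fin m × Fin (m + 1)) → (Fin n → Option (Fin m)) :=
    fun v i => if (v i).2 = 0 then some (v i).1 else none with hφ
  set T : Finset (Fin n → Option (Fin m)) :=
    Finset.univ.filter (fun g => (Finset.univ.filter fun i => (g i).isSome).card ≤ s) with hT
  have hmaps : ∀ v ∈ V, φ v ∈ T := by
    intro v hv
    rw [hT, Finset.mem_filter]
    refine ⟨Finset.mem_univ _, ?_⟩
    have : (Finset.univ.filter fun i => ((φ v) i).isSome) =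
        (Finset.univ.filter fun i => (v i).2 = 0) := by
      apply Finset.filter_congr
      intro i _
      rw [hφ]
      by_cases h : (v i).2 = 0 <;> simp [h]
    rw [this]
    exact (hV v hv).1
  have hinj : Set.InjOn φ V := by
    intro v hv v' hv' heq
    funext i
    have hi := congrFun heq i
    rw [hφ] at hi
    simp only at hi
    rcases (hV v hv).2 i with h1 | h1 <;> rcases (hV v' hv').2 i with h2 | h2
    · rw [if_pos h1, if_pos h2] at hi
      have : (v i).1 = (v' i).1 := by simpa using hi
      exact Prod.ext this (by rw [h1, h2])
    · rw [if_pos h1] at hi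
      by_cases h2' : (v' i).2 = 0
      · rw [if_pos h2'] at hi
        have : (v i).1 = (v' i).1 := by simpa using hi
        exact Prod.ext this (by rw [h1, h2'])
      · rw [if_neg h2'] at hi; simp at hi
    · by_cases h1' : (v i).2 = 0
      · rw [if_pos h1', if_pos h2] at hi
        have : (v i).1 = (v' i).1 := by simpa using hi
        exact Prod.ext this (by rw [h1', h2])
      · rw [if_neg h1', if_pos h2] at hi; simp at hi
    · rw [h1, h2]
  have hcard : V.card ≤ T.card := Finset.card_le_card_of_injOn φ hmaps hinj
  -- now bound T.card
  have key : (T.card : ℝ) ≤ θ ^ s * ∑ g : Fin n → Option (Fin m),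
      (1 / θ) ^ (Finset.univ.filter fun i => (g i).isSome).card := by
    rw [Finset.card_eq_sum_ones T]
    push_cast
    rw [Finset.mul_sum]
    refine (Finset.sum_le_sum ?_).trans
      (Finset.sum_le_sum_of_subset_of_nonneg (Finset.subset_univ T) ?_)
    · intro g hg
      rw [hT, Finset.mem_filter] at hg
      set c := (Finset.univ.filter fun i => (g i).isSome).card
      have hc : c ≤ s := hg.2
      have h1 : θ ^ c ≤ θ ^ s := pow_le_pow_right₀ hθ hc
      rw [one_div, inv_pow, ← div_eq_mul_inv]
      rw [le_div_iff₀ (by positivity)]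
      simpa using h1
    · intro g _ _
      positivity
  have expand : ∑ g : Fin n → Option (Fin m),
      (1 / θ) ^ (Finset.univ.filter fun i => (g i).isSome).card = (1 + m / θ) ^ n := by
    have h1 : ∀ g : Fin n → Option (Fin m),
        (1 / θ) ^ (Finset.univ.filter fun i => (g i).isSome).card =
          ∏ i : Fin n, (if (g i).isSome then 1 / θ else 1) := by
      intro g
      rw [Finset.prod_ite, Finset.prod_const, Finset.prod_const, one_pow, mul_one]
    simp_rw [h1]
    rw [← Fintype.piFinset_univ, ← Finset.prod_univ_sum
      (fun _ : Fin n => (Finset.univ : Finset (Option (Fin m))))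
      (fun _ o => if o.isSome then 1 / θ else 1)]
    have h2 : ∀ i : Fin n, (∑ o ∈ (Finset.univ : Finset (Option (Fin m))),
        (if o.isSome then 1 / θ else 1)) = 1 + m / θ := by
      intro i
      rw [Fintype.sum_option]
      simp [Finset.sum_const, div_eq_mul_inv, mul_comm]
    rw [Finset.prod_congr rfl (fun i _ => h2 i), Finset.prod_const, Finset.card_univ,
      Fintype.card_fin]
  calc (V.card : ℝ) ≤ (T.card : ℝ) := by exact_mod_cast hcard
    _ ≤ θ ^ s * ∑ g : Fin n → Option (Fin m),
        (1 / θ) ^ (Finset.univ.filter fun i => (g i).isSome).card := key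
    _ = θ ^ s * (1 + m / θ) ^ n := by rw [expand]

/-- Sum of the measures of fibers over a finset equals the measure of their union. -/
lemma meas_biUnion_toReal {X : Type*} [MeasurableSpace X] (μ : MeasureTheory.Measure X)
    [MeasureTheory.IsFiniteMeasure μ]
    {ι : Type*} [MeasurableSpace ι] [MeasurableSingletonClass ι] [DecidableEq ι]
    {T : X → ι} (hT : Measurable T) (t : Finset ι) :
    ∑ i ∈ t, (μ (T ⁻¹' {i})).toReal = (μ (⋃ i ∈ t, T ⁻¹' {i})).toReal := by
  classical
  rw [MeasureTheory.measure_biUnion_finset ?_ (fun i _ => hT (measurableSet_singleton i))]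
  · rw [ENNReal.toReal_sum]
    intro i _
    exact MeasureTheory.measure_ne_top μ _
  · intro i _ j _ hij
    exact Set.disjoint_left.2 fun x hxi hxj => hij (hxi.symm.trans hxj)


/-- Fiber decomposition of the measure of a preimage under a composed finite-valued map. -/
lemma meas_group_sum {X : Type*} [MeasurableSpace X] (μ : Measure X) [IsFiniteMeasure μ]
    {ι κ : Type*} [Fintype ι] [MeasurableSpace ι] [MeasurableSingletonClass ι]
    [DecidableEq ι] [DecidableEq κ]
    {T : X → ι} (hT : Measurable T) (γ : ι → κ) (k : κ) :
    (μ ((fun x => γ (T x)) ⁻¹' {k})).toReal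
      = ∑ i ∈ Finset.univ.filter (fun i => γ i = k), (μ (T ⁻¹' {i})).toReal := by
  classical
  have hset : (fun x => γ (T x)) ⁻¹' {k} =
      ⋃ i ∈ Finset.univ.filter (fun i => γ i = k), T ⁻¹' {i} := by
    ext x
    simp only [Set.mem_preimage, Set.mem_singleton_iff, Set.mem_iUnion, Finset.mem_filter,
      Finset.mem_univ, true_and, exists_prop]
    constructor
    · intro h; exact ⟨T x, h, rfl⟩
    · rintro ⟨i, hi, hx⟩; rw [hx]; exact hi
  rw [hset, measure_biUnion_finset ?_ (fun i _ => hT (measurableSet_singleton i))]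
  · rw [ENNReal.toReal_sum]
    intro i _
    exact measure_ne_top μ _
  · intro i _ j _ hij
    refine Set.disjoint_left.2 fun x hxi hxj => ?_
    exact hij (hxi.symm.trans hxj)

/-- Total mass of the fibers of a finite-valued measurable map. -/
lemma meas_total_sum {X : Type*} [MeasurableSpace X] (μ : Measure X) [IsProbabilityMeasure μ]
    {ι : Type*} [Fintype ι] [MeasurableSpace ι] [MeasurableSingletonClass ι] [DecidableEq ι]
    {T : X → ι} (hT : Measurable T) :
    ∑ i, (μ (T ⁻¹' {i})).toReal = 1 := by
  classical
  have h := meas_group_sum μ hT (fun _ => ()) ()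
  rw [Finset.filter_true_of_mem (fun i _ => rfl)] at h
  rw [← h]
  have : (fun x : X => ()) ⁻¹' {()} = Set.univ := by
    ext x; simp
  rw [this, measure_univ]
  simp

/-- For a bounded real sequence, the `EReal`-liminf is the coercion of the real liminf. -/
lemma liminf_coe_ereal {u : ℕ → ℝ} {M : ℝ} (h0 : ∀ n, 0 ≤ u n) (hM : ∀ n, u n ≤ M) :
    Filter.atTop.liminf (fun n => ((u n : ℝ) : EReal)) = ((Filter.atTop.liminf u : ℝ) : EReal) := by
  have hmono : Monotone ((↑) : ℝ → EReal) := fun a b hab => EReal.coe_le_coe_iff.2 hab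
  have := hmono.map_liminf_of_continuousAt (F := atTop) u
    (continuous_coe_real_ereal.continuousAt)
    ((isBoundedUnder_of ⟨M, hM⟩ : Filter.IsBoundedUnder (· ≤ ·) atTop u).isCoboundedUnder_ge)
    (isBoundedUnder_of ⟨0, fun n => h0 n⟩)
  rw [this]
  rfl

/-- An `EReal` ≤ comparison from real epsilon approximations. -/
lemma ereal_le_of_forall_add {a : ℝ} {T : EReal} (hT : ∃ t : ℝ, (t : EReal) ≤ T)
    (h : ∀ δ : ℝ, 0 < δ → (a : EReal) ≤ T + (δ : EReal)) : (a : EReal) ≤ T := by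
  rcases eq_top_or_lt_top T with rfl | hlt
  · exact le_top
  · obtain ⟨t, ht⟩ := hT
    lift T to ℝ using ⟨ne_of_lt hlt, by
      intro hbot
      rw [hbot] at ht
      exact absurd (le_bot_iff.1 ht) (EReal.coe_ne_bot t)⟩
    have : ∀ δ : ℝ, 0 < δ → a ≤ T + δ := by
      intro δ hδ
      have := h δ hδ
      rw [← EReal.coe_add] at this
      exact EReal.coe_le_coe_iff.1 this
    exact EReal.coe_le_coe_iff.2 (le_of_forall_pos_le_add this)

lemma pde_eq {X : Type*} [MeasurableSpace X] (μ : Measure X) (f : X → X)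
    {m : ℕ} (P : X → Fin m) (n : ℕ) :
    partitionDynEntropy μ f P n = ∑ w : Fin n → Fin m,
      -((μ ((fun x (i : Fin n) => P (f^[(i:ℕ)] x)) ⁻¹' {w})).toReal *
        Real.log (μ ((fun x (i : Fin n) => P (f^[(i:ℕ)] x)) ⁻¹' {w})).toReal) := by
  rw [partitionDynEntropy, Finset.sum_neg_distrib]
  congr 1
  refine Finset.sum_congr rfl fun w _ => ?_
  have : {x | ∀ i : Fin n, P (f^[(i:ℕ)] x) = w i}
      = (fun x (i : Fin n) => P (f^[(i:ℕ)] x)) ⁻¹' {w} := by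
    ext x
    simp [funext_iff]
  rw [this]

lemma pde_nonneg {X : Type*} [MeasurableSpace X] (μ : Measure X) [IsProbabilityMeasure μ]
    (f : X → X) {m : ℕ} (P : X → Fin m) (n : ℕ) : 0 ≤ partitionDynEntropy μ f P n := by
  rw [pde_eq]
  refine Finset.sum_nonneg fun w _ => ?_
  set p := (μ ((fun x (i : Fin n) => P (f^[(i:ℕ)] x)) ⁻¹' {w})).toReal with hp
  have h0 : 0 ≤ p := ENNReal.toReal_nonneg
  have h1 : p ≤ 1 := by
    rw [hp]
    have := prob_le_one (μ := μ) (s := (fun x (i : Fin n) => P (f^[(i:ℕ)] x)) ⁻¹' {w})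
    calc (μ _).toReal ≤ (1 : ℝ≥0∞).toReal := ENNReal.toReal_mono ENNReal.one_ne_top this
      _ = 1 := by simp
  have h2 : Real.log p ≤ 0 := Real.log_nonpos h0 h1
  nlinarith

lemma pde_le {X : Type*} [MeasurableSpace X] (μ : Measure X) [IsProbabilityMeasure μ]
    {f : X → X} (hf : Measurable f) {m : ℕ} {P : X → Fin m} (hP : Measurable P) (n : ℕ) :
    partitionDynEntropy μ f P n ≤ Real.log ((m ^ n : ℕ)) := by
  classical
  rw [pde_eq]
  set T : X → (Fin n → Fin m) := fun x (i : Fin n) => P (f^[(i:ℕ)] x) with hT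
  have hTm : Measurable T := measurable_pi_lambda _ fun i => hP.comp (hf.iterate _)
  have hsum : ∑ w, (μ (T ⁻¹' {w})).toReal = 1 := meas_total_sum μ hTm
  have := gibbs_aux (Finset.univ : Finset (Fin n → Fin m))
    (fun w => (μ (T ⁻¹' {w})).toReal) (fun w _ => ENNReal.toReal_nonneg)
  rw [hsum] at this
  simp only [Real.log_one, mul_zero, neg_zero, one_mul, zero_add] at this
  refine this.trans ?_
  have hcard : (Finset.univ.filter fun w : Fin n → Fin m =>
      (μ (T ⁻¹' {w})).toReal ≠ 0).card ≤ m ^ n := by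
    calc _ ≤ (Finset.univ : Finset (Fin n → Fin m)).card := Finset.card_filter_le _ _
      _ = m ^ n := by rw [Finset.card_univ, Fintype.card_fun, Fintype.card_fin, Fintype.card_fin]
  exact log_nat_mono hcard

set_option maxHeartbeats 1000000 in
lemma per_n_bound {X : Type*} [MeasurableSpace X] (μ : Measure X) [IsProbabilityMeasure μ]
    (f : X → X) (hf : Measurable f) (hinv : MeasurePreserving f μ μ)
    {m : ℕ} (hm : 0 < m) (P : X → Fin m) (hP : Measurable P)
    (B : Fin m → Set X) (hBsub : ∀ j, B j ⊆ P ⁻¹' {j})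
    (Q : X → Fin (m+1)) (hQmeas : Measurable Q)
    (hQsucc : ∀ x j, Q x = Fin.succ j → x ∈ B j)
    (U : Fin m → Set X) (hBU : ∀ j l x, x ∈ B l → x ∈ U j → l = j)
    (ε θ : ℝ) (hε : 0 < ε) (hθ : 1 ≤ θ)
    (hμ0 : (μ (Q ⁻¹' {0})).toReal ≤ ε^2)
    (n : ℕ) (hn : 1 ≤ n)
    (N : ℕ) (hN1 : 1 ≤ N)
    (S : Finset (Fin n → Fin m)) (hScard : S.card = N)
    (hScover : (Set.univ : Set X) ⊆ ⋃ w ∈ S, ⋂ i : Fin n, f^[(i:ℕ)] ⁻¹' U (w i)) :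
    partitionDynEntropy μ f P n ≤ Real.log N + Real.log 2 +
      n * (ε * Real.log θ + Real.log (1 + m/θ) + ε * Real.log (m*(m+1))) := by
  classical
  have hθ0 : (0:ℝ) < θ := lt_of_lt_of_le one_pos hθ
  have hm1 : (1:ℝ) ≤ m := by exact_mod_cast hm
  -- itinerary maps
  set ι := (Fin n → Fin m × Fin (m+1)) with hι
  set ItR : X → ι := fun x i => (P (f^[(i:ℕ)] x), Q (f^[(i:ℕ)] x)) with hItR
  set ItP : X → (Fin n → Fin m) := fun x i => P (f^[(i:ℕ)] x) with hItP
  have hit : ∀ i : Fin n, Measurable (f^[(i:ℕ)]) := fun i => hf.iterate _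
  have hItRm : Measurable ItR :=
    measurable_pi_lambda _ fun i => ((hP.comp (hit i)).prodMk (hQmeas.comp (hit i)))
  have hItPm : Measurable ItP := measurable_pi_lambda _ fun i => hP.comp (hit i)
  set p : ι → ℝ := fun v => (μ (ItR ⁻¹' {v})).toReal with hp
  set pP : (Fin n → Fin m) → ℝ := fun w => (μ (ItP ⁻¹' {w})).toReal with hpP
  have hp0 : ∀ v, 0 ≤ p v := fun v => ENNReal.toReal_nonneg
  have hpsum : ∑ v, p v = 1 := meas_total_sum μ hItRm
  -- Step 1 : rewrite the entropy
  have hPD : partitionDynEntropy μ f P n = ∑ w, -(pP w * Real.log (pP w)) := by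
    rw [partitionDynEntropy, Finset.sum_neg_distrib]
    congr 1
    refine Finset.sum_congr rfl fun w _ => ?_
    have : {x | ∀ i : Fin n, P (f^[(i:ℕ)] x) = w i} = ItP ⁻¹' {w} := by
      ext x
      simp [hItP, funext_iff]
    rw [this]
  -- Step 2 : coarsening
  have hcoarse : ∑ w, -(pP w * Real.log (pP w)) ≤ ∑ v, -(p v * Real.log (p v)) := by
    refine coarsen_entropy_le p hp0 (fun v => Prod.fst ∘ v) pP fun w => ?_
    have h1 : (fun x => (Prod.fst ∘ ItR x)) = ItP := rfl
    have := meas_group_sum μ hItRm (fun v => Prod.fst ∘ v) w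
    rw [show ((fun x => Prod.fst ∘ ItR x) ⁻¹' {w}) = ItP ⁻¹' {w} from by rw [h1]] at this
    exact this
  -- compatibility
  set Compat : ι → (Fin n → Fin m) → Prop :=
    fun v w => ∀ i, (v i).2 = 0 ∨ v i = (w i, (w i).succ) with hCompat
  have hexists : ∀ v : ι, p v ≠ 0 → ∃ w, w ∈ S ∧ Compat v w := by
    intro v hv
    have hne : (ItR ⁻¹' {v}).Nonempty := by
      rw [Set.nonempty_iff_ne_empty]
      intro h
      refine hv ?_
      show (μ (ItR ⁻¹' {v})).toReal = 0
      rw [h]; simp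
    obtain ⟨x, hx⟩ := hne
    have hx' : ItR x = v := hx
    obtain ⟨w, hwS, hxw⟩ : ∃ w ∈ S, x ∈ ⋂ i : Fin n, f^[(i:ℕ)] ⁻¹' U (w i) := by
      have := hScover (Set.mem_univ x)
      simpa only [Set.mem_iUnion, exists_prop] using this
    refine ⟨w, hwS, fun i => ?_⟩
    by_cases h0 : (v i).2 = 0
    · exact Or.inl h0
    · right
      obtain ⟨j, hj⟩ := Fin.eq_succ_of_ne_zero h0
      have hPQ : (P (f^[(i:ℕ)] x), Q (f^[(i:ℕ)] x)) = v i := congrFun hx' i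
      have hQy : Q (f^[(i:ℕ)] x) = j.succ := by rw [← hj, ← hPQ]
      have hyB : f^[(i:ℕ)] x ∈ B j := hQsucc _ j hQy
      have hyU : f^[(i:ℕ)] x ∈ U (w i) := by
        have := Set.mem_iInter.1 hxw i
        exact this
      have hjw : j = w i := hBU (w i) j _ hyB hyU
      have hPy : P (f^[(i:ℕ)] x) = j := hBsub j hyB
      rw [← hPQ, hPy, hQy, hjw]
  -- zero count and grouping
  set s : ℕ := Nat.floor (ε * n) with hs
  set Zc : ι → ℕ := fun v => (Finset.univ.filter fun i => (v i).2 = 0).card with hZc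
  set γ : ι → Option {w : Fin n → Fin m // w ∈ S} := fun v =>
    if h : Zc v ≤ s ∧ ∃ w, w ∈ S ∧ Compat v w then some ⟨h.2.choose, h.2.choose_spec.1⟩
    else none with hγ
  have hgroup := group_entropy_bound p hp0 hpsum γ
  have hcardκ : ((Fintype.card (Option {w : Fin n → Fin m // w ∈ S}) : ℕ) : ℝ) = N + 1 := by
    rw [Fintype.card_option, Fintype.card_coe, hScard]
    push_cast
    ring
  -- the uniform bound on good groups
  set K : ℝ := θ ^ s * (1 + m / θ) ^ n with hK
  have hK1 : 1 ≤ K := by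
    rw [hK]
    have h1 : (1:ℝ) ≤ θ ^ s := one_le_pow₀ hθ
    have h2 : (1:ℝ) ≤ (1 + m/θ) ^ n := one_le_pow₀ (by
      have : 0 ≤ (m:ℝ)/θ := div_nonneg (by positivity) hθ0.le
      linarith)
    nlinarith
  -- helper for q_k log n_k ≤ q_k log K'
  have hqlog : ∀ (k : Option {w : Fin n → Fin m // w ∈ S}) (K' : ℝ), 1 ≤ K' →
      ((((Finset.univ.filter (fun v => γ v = k)).filter (fun v => p v ≠ 0)).card : ℝ) ≤ K') →
      (∑ v ∈ Finset.univ.filter (fun v => γ v = k), p v) *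
        Real.log (((Finset.univ.filter (fun v => γ v = k)).filter (fun v => p v ≠ 0)).card) ≤
      (∑ v ∈ Finset.univ.filter (fun v => γ v = k), p v) * Real.log K' := by
    intro k K' hK' hle
    have hq0' : 0 ≤ ∑ v ∈ Finset.univ.filter (fun v => γ v = k), p v :=
      Finset.sum_nonneg fun v _ => hp0 v
    rcases Nat.eq_zero_or_pos (((Finset.univ.filter (fun v => γ v = k)).filter
        (fun v => p v ≠ 0)).card) with h0 | hpos
    · rw [h0]
      simp only [Nat.cast_zero, Real.log_zero, mul_zero]
      exact mul_nonneg hq0' (Real.log_nonneg hK')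
    · exact mul_le_mul_of_nonneg_left
        (Real.log_le_log (by exact_mod_cast hpos) hle) hq0'
  -- good groups : cardinality bound
  have hgood : ∀ t : {w : Fin n → Fin m // w ∈ S},
      ((((Finset.univ.filter (fun v => γ v = some t)).filter (fun v => p v ≠ 0)).card : ℝ) ≤ K) := by
    intro t
    rw [hK]
    refine count_compat_le θ hθ t.1 _ fun v hv => ?_
    rw [Finset.mem_filter, Finset.mem_filter] at hv
    obtain ⟨⟨-, hvk⟩, -⟩ := hv
    by_cases hcond : Zc v ≤ s ∧ ∃ w, w ∈ S ∧ Compat v w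
    · rw [hγ] at hvk
      simp only at hvk
      rw [dif_pos hcond] at hvk
      have heq : hcond.2.choose = t.1 := by
        have := Option.some_injective _ hvk
        exact congrArg Subtype.val this
      have hcompat : Compat v t.1 := heq ▸ hcond.2.choose_spec.2
      exact ⟨hcond.1, hcompat⟩
    · rw [hγ] at hvk
      simp only at hvk
      rw [dif_neg hcond] at hvk
      exact absurd hvk (by simp)
  -- bad group : measure bound via Markov
  have hbadZ : ∀ v : ι, γ v = none → p v ≠ 0 → s < Zc v := by
    intro v hnone hv
    by_contra hle
    push_neg at hle
    have hcond : Zc v ≤ s ∧ ∃ w, w ∈ S ∧ Compat v w := ⟨hle, hexists v hv⟩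
    rw [hγ] at hnone
    simp only at hnone
    rw [dif_pos hcond] at hnone
    exact absurd hnone (by simp)
  -- Markov inequality for the bad set
  have hμ0meas : MeasurableSet (Q ⁻¹' {0}) := hQmeas (measurableSet_singleton 0)
  set G : X → ℝ≥0∞ := fun x => ∑ i : Fin n, (if Q (f^[(i:ℕ)] x) = 0 then (1:ℝ≥0∞) else 0)
    with hG
  have hGmeas : Measurable G := by
    apply Finset.measurable_sum
    intro i _
    have hsmeas : MeasurableSet {x | Q (f^[(i:ℕ)] x) = 0} :=
      (hQmeas.comp (hit i)) (measurableSet_singleton 0)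
    exact Measurable.ite hsmeas measurable_const measurable_const
  have hGint : ∫⁻ x, G x ∂μ = n * μ (Q ⁻¹' {0}) := by
    have hsplit : ∫⁻ x, G x ∂μ
        = ∑ i : Fin n, ∫⁻ x, (if Q (f^[(i:ℕ)] x) = 0 then (1:ℝ≥0∞) else 0) ∂μ := by
      simp only [hG]
      exact lintegral_finset_sum _ (fun i _ => Measurable.ite
        ((hQmeas.comp (hit i)) (measurableSet_singleton 0)) measurable_const measurable_const)
    rw [hsplit]
    · have heach : ∀ i : Fin n, ∫⁻ x, (if Q (f^[(i:ℕ)] x) = 0 then (1:ℝ≥0∞) else 0) ∂μ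
          = μ (Q ⁻¹' {0}) := by
        intro i
        have hrw : (fun x => (if Q (f^[(i:ℕ)] x) = 0 then (1:ℝ≥0∞) else 0))
            = Set.indicator (f^[(i:ℕ)] ⁻¹' (Q ⁻¹' {0})) (fun _ => 1) := by
          funext x
          simp [Set.indicator_apply, Set.mem_preimage]
        rw [hrw, lintegral_indicator ((hit i) hμ0meas), setLIntegral_one]
        exact (hinv.iterate (i:ℕ)).measure_preimage hμ0meas.nullMeasurableSet
      rw [Finset.sum_congr rfl (fun i _ => heach i), Finset.sum_const, Finset.card_univ,
        Fintype.card_fin]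
      simp [nsmul_eq_mul]
  set Bad : Set X := {x | ((s:ℝ≥0∞) + 1) ≤ G x} with hBad
  have hMarkov : ((s:ℝ≥0∞) + 1) * μ Bad ≤ (n : ℝ≥0∞) * μ (Q ⁻¹' {0}) := by
    rw [← hGint]
    exact mul_meas_ge_le_lintegral₀ hGmeas.aemeasurable _
  have hcell_subset : ∀ v : ι, s < Zc v → ItR ⁻¹' {v} ⊆ Bad := by
    intro v hv x hx
    have hx' : ItR x = v := hx
    have hGx : G x = ((Zc v : ℕ) : ℝ≥0∞) := by
      simp only [hG]
      have hcongr : ∀ i : Fin n, (if Q (f^[(i:ℕ)] x) = 0 then (1:ℝ≥0∞) else 0)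
          = (if (v i).2 = 0 then (1:ℝ≥0∞) else 0) := by
        intro i
        have hQv : Q (f^[(i:ℕ)] x) = (v i).2 := by
          conv_rhs => rw [← congrFun hx' i]
        rw [hQv]
      rw [Finset.sum_congr rfl fun i _ => hcongr i, Finset.sum_boole]
    show ((s:ℝ≥0∞) + 1) ≤ G x
    rw [hGx]
    exact_mod_cast Nat.succ_le_of_lt hv
  have hμBad : (μ Bad).toReal ≤ ε := by
    have hfin : μ Bad ≠ ⊤ := measure_ne_top μ _
    have hfin2 : μ (Q ⁻¹' {0}) ≠ ⊤ := measure_ne_top μ _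
    have h2 : ((s:ℝ)+1) * (μ Bad).toReal ≤ (n:ℝ) * (μ (Q ⁻¹' {0})).toReal := by
      have h3 := ENNReal.toReal_mono (ENNReal.mul_ne_top (by simp) hfin2) hMarkov
      rw [ENNReal.toReal_mul, ENNReal.toReal_mul] at h3
      rw [ENNReal.toReal_add (by simp) (by simp)] at h3
      simpa using h3
    have hεn : ε * n < (s:ℝ) + 1 := by
      rw [hs]
      exact Nat.lt_floor_add_one _
    have hW0 : 0 ≤ (μ Bad).toReal := ENNReal.toReal_nonneg
    have hμ00 : 0 ≤ (μ (Q ⁻¹' {0})).toReal := ENNReal.toReal_nonneg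
    have hn1 : (1:ℝ) ≤ n := by exact_mod_cast hn
    nlinarith [mul_le_mul_of_nonneg_right hεn.le hε.le, h2, hμ0,
      mul_le_mul_of_nonneg_left hμ0 (le_trans zero_le_one hn1)]
  have hqnone : ∑ v ∈ Finset.univ.filter (fun v => γ v = none), p v ≤ ε := by
    have hstep1 : ∑ v ∈ Finset.univ.filter (fun v => γ v = none), p v
        ≤ ∑ v ∈ Finset.univ.filter (fun v => s < Zc v), p v := by
      rw [← Finset.sum_filter_ne_zero (Finset.univ.filter (fun v => γ v = none)) (f := p)]
      refine Finset.sum_le_sum_of_subset_of_nonneg ?_ (fun v _ _ => hp0 v)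
      intro v hv
      rw [Finset.mem_filter, Finset.mem_filter] at hv
      rw [Finset.mem_filter]
      exact ⟨Finset.mem_univ _, hbadZ v hv.1.2 hv.2⟩
    have hstep2 : ∑ v ∈ Finset.univ.filter (fun v => s < Zc v), p v
        = (μ (⋃ v ∈ Finset.univ.filter (fun v => s < Zc v), ItR ⁻¹' {v})).toReal :=
      meas_biUnion_toReal μ hItRm _
    have hsub : (⋃ v ∈ Finset.univ.filter (fun v => s < Zc v), ItR ⁻¹' {v}) ⊆ Bad := by
      refine Set.iUnion₂_subset fun v hv => ?_
      rw [Finset.mem_filter] at hv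
      exact hcell_subset v hv.2
    calc ∑ v ∈ Finset.univ.filter (fun v => γ v = none), p v
        ≤ ∑ v ∈ Finset.univ.filter (fun v => s < Zc v), p v := hstep1
      _ = (μ (⋃ v ∈ Finset.univ.filter (fun v => s < Zc v), ItR ⁻¹' {v})).toReal := hstep2
      _ ≤ (μ Bad).toReal := ENNReal.toReal_mono (measure_ne_top μ _) (measure_mono hsub)
      _ ≤ ε := hμBad
  -- cardinality of the whole itinerary space
  have hcardι : ((Fintype.card ι : ℕ) : ℝ) = ((m:ℝ) * ((m:ℝ)+1)) ^ n := by
    show ((Fintype.card (Fin n → Fin m × Fin (m+1)) : ℕ) : ℝ) = _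
    rw [Fintype.card_fun, Fintype.card_prod, Fintype.card_fin, Fintype.card_fin,
      Fintype.card_fin]
    push_cast
    ring
  have hCreal1 : (1:ℝ) ≤ (m:ℝ) * ((m:ℝ)+1) := by nlinarith
  -- the bad-group term
  have hbadterm : (∑ v ∈ Finset.univ.filter (fun v => γ v = none), p v) *
      Real.log ((((Finset.univ.filter (fun v => γ v = none)).filter
        (fun v => p v ≠ 0)).card : ℕ))
      ≤ ε * ((n:ℝ) * Real.log ((m:ℝ) * ((m:ℝ)+1))) := by
    have hcardle : ((((Finset.univ.filter (fun v => γ v = none)).filter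
        (fun v => p v ≠ 0)).card : ℕ) : ℝ) ≤ ((m:ℝ) * ((m:ℝ)+1)) ^ n := by
      rw [← hcardι]
      exact_mod_cast (Finset.card_le_univ _).trans (le_of_eq Finset.card_univ)
    have h1 := hqlog none (((m:ℝ) * ((m:ℝ)+1)) ^ n) (one_le_pow₀ hCreal1) hcardle
    rw [Real.log_pow] at h1
    refine h1.trans ?_
    exact mul_le_mul_of_nonneg_right hqnone
      (mul_nonneg (Nat.cast_nonneg n) (Real.log_nonneg hCreal1))
  -- mass of good groups
  have hfib : ∑ k : Option {w : Fin n → Fin m // w ∈ S},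
      (∑ v ∈ Finset.univ.filter (fun v => γ v = k), p v) = 1 := by
    rw [Finset.sum_fiberwise]
    exact hpsum
  rw [Fintype.sum_option] at hfib
  have hsumsome : ∑ t : {w : Fin n → Fin m // w ∈ S},
      (∑ v ∈ Finset.univ.filter (fun v => γ v = some t), p v) ≤ 1 := by
    have h0 : 0 ≤ ∑ v ∈ Finset.univ.filter (fun v => γ v = none), p v :=
      Finset.sum_nonneg fun v _ => hp0 v
    linarith
  -- the good-group sum
  have hgoodsum : ∑ t : {w : Fin n → Fin m // w ∈ S},
      (∑ v ∈ Finset.univ.filter (fun v => γ v = some t), p v) *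
        Real.log ((((Finset.univ.filter (fun v => γ v = some t)).filter
          (fun v => p v ≠ 0)).card : ℕ))
      ≤ Real.log K := by
    calc ∑ t : {w : Fin n → Fin m // w ∈ S},
        (∑ v ∈ Finset.univ.filter (fun v => γ v = some t), p v) *
          Real.log ((((Finset.univ.filter (fun v => γ v = some t)).filter
            (fun v => p v ≠ 0)).card : ℕ))
        ≤ ∑ t : {w : Fin n → Fin m // w ∈ S},
          (∑ v ∈ Finset.univ.filter (fun v => γ v = some t), p v) * Real.log K :=
          Finset.sum_le_sum fun t _ => hqlog (some t) K hK1 (hgood t)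
      _ = (∑ t : {w : Fin n → Fin m // w ∈ S},
            ∑ v ∈ Finset.univ.filter (fun v => γ v = some t), p v) * Real.log K := by
          rw [Finset.sum_mul]
      _ ≤ 1 * Real.log K :=
          mul_le_mul_of_nonneg_right hsumsome (Real.log_nonneg hK1)
      _ = Real.log K := one_mul _
  -- bound on log K
  have h1mθ : (0:ℝ) < 1 + (m:ℝ)/θ := by
    have : 0 ≤ (m:ℝ)/θ := div_nonneg (Nat.cast_nonneg m) hθ0.le
    linarith
  have hlogK : Real.log K ≤ ε * n * Real.log θ + n * Real.log (1 + (m:ℝ)/θ) := by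
    rw [hK, Real.log_mul (by positivity) (by positivity), Real.log_pow, Real.log_pow]
    have h1 : (s:ℝ) ≤ ε * n := by
      rw [hs]
      exact Nat.floor_le (by positivity)
    have h2 : 0 ≤ Real.log θ := Real.log_nonneg hθ
    have h3 : 0 ≤ Real.log (1 + (m:ℝ)/θ) := Real.log_nonneg (by
      have : 0 ≤ (m:ℝ)/θ := div_nonneg (Nat.cast_nonneg m) hθ0.le
      linarith)
    nlinarith [mul_le_mul_of_nonneg_right h1 h2]
  -- bound on log (card κ)
  have hκbound : Real.log ((Fintype.card (Option {w : Fin n → Fin m // w ∈ S}) : ℕ))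
      ≤ Real.log N + Real.log 2 := by
    rw [hcardκ]
    have hN1' : (1:ℝ) ≤ N := by exact_mod_cast hN1
    calc Real.log ((N:ℝ)+1) ≤ Real.log (2*N) := Real.log_le_log (by linarith) (by linarith)
      _ = Real.log 2 + Real.log N := Real.log_mul two_ne_zero (by linarith)
      _ = Real.log N + Real.log 2 := add_comm _ _
  -- split the group sum
  rw [Fintype.sum_option] at hgroup
  have hring : ε * ↑n * Real.log θ + ↑n * Real.log (1 + ↑m / θ)
      + ε * (↑n * Real.log ((m:ℝ) * ((m:ℝ) + 1)))
      = ↑n * (ε * Real.log θ + Real.log (1 + ↑m / θ)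
        + ε * Real.log ((m:ℝ) * ((m:ℝ) + 1))) := by ring
  calc partitionDynEntropy μ f P n
      = ∑ w, -(pP w * Real.log (pP w)) := hPD
    _ ≤ ∑ v, -(p v * Real.log (p v)) := hcoarse
    _ ≤ _ := hgroup
    _ ≤ Real.log N + Real.log 2 +
        ↑n * (ε * Real.log θ + Real.log (1 + ↑m / θ)
          + ε * Real.log ((m:ℝ) * ((m:ℝ) + 1))) := by
      rw [← hring]
      linarith [hκbound, hbadterm, hgoodsum, hlogK]

set_option maxHeartbeats 1000000 in
/-- **Goodwyn's variational inequality.** Let `X` be a compact metric space,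
`f : X → X` a homeomorphism and `μ` an `f`-invariant Borel probability measure on `X`.
Then `h_μ(f) ≤ h_top(f)`. -/
theorem goodwyn_variational_inequality
    {X : Type*} [MetricSpace X] [CompactSpace X] [MeasurableSpace X] [BorelSpace X]
    (f : Homeomorph X X) (μ : Measure X) [IsProbabilityMeasure μ]
    (hinv : MeasurePreserving f μ μ) :
    kolmogorovSinaiEntropy μ f ≤ topEntropy (f : X → X) := by
  classical
  rcases isEmpty_or_nonempty X with hX | hX
  · exfalso
    have h1 : μ Set.univ = 1 := measure_univ
    rw [Set.univ_eq_empty_iff.mpr hX, measure_empty] at h1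
    exact zero_ne_one h1
  have hfm : Measurable (⇑f) := f.continuous.measurable
  -- general cover facts
  have hcovuniv : ∀ (k : ℕ) (U : Fin k → Set X), (⋃ i, U i) = Set.univ → ∀ n : ℕ,
      (Set.univ : Set X) ⊆ ⋃ w ∈ (Finset.univ : Finset (Fin n → Fin k)),
        ⋂ i : Fin n, (⇑f)^[(i:ℕ)] ⁻¹' U (w i) := by
    intro k U hU n x _
    have hchoice : ∀ i : Fin n, ∃ j : Fin k, (⇑f)^[(i:ℕ)] x ∈ U j := by
      intro i
      have : (⇑f)^[(i:ℕ)] x ∈ ⋃ j, U j := hU ▸ Set.mem_univ _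
      simpa only [Set.mem_iUnion] using this
    choose w hw using hchoice
    exact Set.mem_biUnion (Finset.mem_univ w) (Set.mem_iInter.2 fun i => hw i)
  have hcovexists : ∀ (k : ℕ) (U : Fin k → Set X), (⋃ i, U i) = Set.univ →
      ∀ n : ℕ, ∃ S : Finset (Fin n → Fin k), S.card = coverMinCard (⇑f) U n ∧
        (Set.univ : Set X) ⊆ ⋃ w ∈ S, ⋂ i : Fin n, (⇑f)^[(i:ℕ)] ⁻¹' U (w i) := by
    intro k U hU n
    have hne : {c | ∃ S : Finset (Fin n → Fin k), S.card = c ∧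
        (Set.univ : Set X) ⊆ ⋃ w ∈ S, ⋂ i : Fin n, (⇑f)^[(i:ℕ)] ⁻¹' U (w i)}.Nonempty :=
      ⟨(Finset.univ : Finset (Fin n → Fin k)).card, Finset.univ, rfl, hcovuniv k U hU n⟩
    exact Nat.sInf_mem hne
  have hcov1 : ∀ (k : ℕ) (U : Fin k → Set X), (⋃ i, U i) = Set.univ → ∀ n : ℕ,
      1 ≤ coverMinCard (⇑f) U n := by
    intro k U hU n
    obtain ⟨S, hS1, hS2⟩ := hcovexists k U hU n
    rcases Nat.eq_zero_or_pos (coverMinCard (⇑f) U n) with h0 | h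
    · exfalso
      rw [h0] at hS1
      rw [Finset.card_eq_zero.1 hS1] at hS2
      simpa using hS2 (Set.mem_univ hX.some)
    · exact h
  have hcovle : ∀ (k : ℕ) (U : Fin k → Set X), (⋃ i, U i) = Set.univ → ∀ n : ℕ,
      coverMinCard (⇑f) U n ≤ k ^ n := by
    intro k U hU n
    refine Nat.sInf_le ⟨Finset.univ, ?_, hcovuniv k U hU n⟩
    rw [Finset.card_univ, Fintype.card_fun, Fintype.card_fin, Fintype.card_fin]
  -- topEntropy lower bound from any open cover
  have htopb : ∀ (k : ℕ) (U : Fin k → Set X) (ho : ∀ i, IsOpen (U i))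
      (hU : (⋃ i, U i) = Set.univ),
      ((Filter.atTop.liminf (fun n : ℕ => Real.log (coverMinCard (⇑f) U n) / n) : ℝ) : EReal)
        ≤ topEntropy (⇑f) := by
    intro k U ho hU
    have hb0 : ∀ n : ℕ, 0 ≤ Real.log (coverMinCard (⇑f) U n) / n := fun n =>
      div_nonneg (Real.log_nonneg (by exact_mod_cast hcov1 k U hU n)) (Nat.cast_nonneg n)
    have hbM : ∀ n : ℕ, Real.log (coverMinCard (⇑f) U n) / n ≤ max 0 (Real.log k) := by
      intro n
      rcases Nat.eq_zero_or_pos n with rfl | hn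
      · simp
      · have h1 : Real.log (coverMinCard (⇑f) U n) ≤ Real.log ((k ^ n : ℕ)) :=
          log_nat_mono (hcovle k U hU n)
        have h2 : Real.log (((k ^ n : ℕ) : ℝ)) = n * Real.log k := by
          push_cast
          exact Real.log_pow _ _
        have hn0 : (0:ℝ) < n := by exact_mod_cast hn
        refine le_trans ?_ (le_max_right _ _)
        rw [div_le_iff₀ hn0]
        rw [h2] at h1
        linarith
    rw [← liminf_coe_ereal hb0 hbM]
    have hrfl : topEntropy (⇑f) = ⨆ (k : ℕ)
        (U : {U : Fin k → Set X // (∀ i, IsOpen (U i)) ∧ ⋃ i, U i = Set.univ}),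
        Filter.atTop.liminf fun n : ℕ =>
          ((Real.log (coverMinCard (⇑f) U.1 n) / n : ℝ) : EReal) := rfl
    rw [hrfl]
    exact le_iSup_of_le k (le_iSup_of_le ⟨U, ho, hU⟩ le_rfl)
  -- unfold KS entropy
  have hKS : kolmogorovSinaiEntropy μ ⇑f = ⨆ (m : ℕ) (P : {P : X → Fin m // Measurable P}),
      Filter.atTop.liminf fun n : ℕ =>
        ((partitionDynEntropy μ ⇑f P.1 n / n : ℝ) : EReal) := rfl
  rw [hKS]
  refine iSup_le fun m => iSup_le fun P => ?_
  rcases Nat.eq_zero_or_pos m with rfl | hm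
  · exact (P.1 hX.some).elim0
  have hm1 : (1:ℝ) ≤ m := by exact_mod_cast hm
  -- bounds on the normalized entropies
  have ha0 : ∀ n : ℕ, 0 ≤ partitionDynEntropy μ ⇑f P.1 n / n := fun n =>
    div_nonneg (pde_nonneg μ _ P.1 n) (Nat.cast_nonneg n)
  have haM : ∀ n : ℕ, partitionDynEntropy μ ⇑f P.1 n / n ≤ max 0 (Real.log m) := by
    intro n
    rcases Nat.eq_zero_or_pos n with rfl | hn
    · simp
    · have h1 := pde_le μ hfm P.2 n
      have h2 : Real.log (((m ^ n : ℕ) : ℝ)) = n * Real.log m := by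
        push_cast
        exact Real.log_pow _ _
      have hn0 : (0:ℝ) < n := by exact_mod_cast hn
      refine le_trans ?_ (le_max_right _ _)
      rw [div_le_iff₀ hn0]
      rw [h2] at h1
      linarith
  rw [liminf_coe_ereal ha0 haM]
  -- existence of a real lower bound for topEntropy
  have htriv : ∃ t : ℝ, (t : EReal) ≤ topEntropy (⇑f) := by
    refine ⟨_, htopb 1 (fun _ => Set.univ) (fun _ => isOpen_univ) (Set.iUnion_const _)⟩
  refine ereal_le_of_forall_add htriv fun δ hδ => ?_
  -- choose parameters
  set θ : ℝ := max 1 (4 * m / δ) with hθdef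
  have hθ1 : (1:ℝ) ≤ θ := le_max_left _ _
  have hθ0 : (0:ℝ) < θ := lt_of_lt_of_le one_pos hθ1
  have hlog1 : Real.log (1 + (m:ℝ)/θ) ≤ δ/4 := by
    have h2 : 4 * (m:ℝ) / δ ≤ θ := le_max_right _ _
    have h1 : (m:ℝ)/θ ≤ δ/4 := by
      rw [div_le_div_iff₀ hθ0 (by norm_num : (0:ℝ) < 4)]
      have h3 : δ * (4 * (m:ℝ) / δ) = 4 * m := by field_simp
      nlinarith
    have h3 : (0:ℝ) < 1 + (m:ℝ)/θ := by
      have : 0 ≤ (m:ℝ)/θ := div_nonneg (Nat.cast_nonneg m) hθ0.le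
      linarith
    calc Real.log (1 + (m:ℝ)/θ) ≤ (1 + (m:ℝ)/θ) - 1 := Real.log_le_sub_one_of_pos h3
      _ = (m:ℝ)/θ := by ring
      _ ≤ δ/4 := h1
  have hCnn : (0:ℝ) ≤ Real.log ((m:ℝ) * ((m:ℝ)+1)) := Real.log_nonneg (by nlinarith)
  have hlogθ : (0:ℝ) ≤ Real.log θ := Real.log_nonneg hθ1
  have hD : (0:ℝ) < 4 * (Real.log θ + (Real.log ((m:ℝ)*((m:ℝ)+1)) + 1)) := by nlinarith
  set ε : ℝ := δ / (4 * (Real.log θ + (Real.log ((m:ℝ)*((m:ℝ)+1)) + 1))) with hεdef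
  have hε0 : 0 < ε := div_pos hδ hD
  have hεθ : ε * Real.log θ ≤ δ/4 := by
    rw [hεdef, div_mul_eq_mul_div, div_le_div_iff₀ hD (by norm_num : (0:ℝ) < 4)]
    nlinarith
  have hεC : ε * Real.log ((m:ℝ)*((m:ℝ)+1)) ≤ δ/4 := by
    rw [hεdef, div_mul_eq_mul_div, div_le_div_iff₀ hD (by norm_num : (0:ℝ) < 4)]
    nlinarith
  -- compact subsets of the partition cells
  have hreg : ∀ j : Fin m, ∃ K : Set X, K ⊆ P.1 ⁻¹' {j} ∧ IsCompact K ∧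
      μ ((P.1 ⁻¹' {j}) \ K) < ENNReal.ofReal (ε^2 / m) := by
    intro j
    refine (P.2 (measurableSet_singleton j)).exists_isCompact_diff_lt (measure_ne_top μ _) ?_
    rw [Ne, ENNReal.ofReal_eq_zero, not_le]
    positivity
  choose B hBsub hBcomp hBsmall using hreg
  have hBuniq : ∀ (x : X) (j l : Fin m), x ∈ B j → x ∈ B l → j = l := by
    intro x j l hj hl
    have h1 : P.1 x = j := hBsub j hj
    have h2 : P.1 x = l := hBsub l hl
    rw [← h1, h2]
  -- the auxiliary index map Q
  set Q : X → Fin (m+1) := fun x => if h : ∃ j, x ∈ B j then (h.choose).succ else 0 with hQdef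
  have hQB : ∀ (x : X) (j : Fin m), x ∈ B j → Q x = j.succ := by
    intro x j hj
    have hex : ∃ j', x ∈ B j' := ⟨j, hj⟩
    simp only [hQdef]
    rw [dif_pos hex]
    exact congrArg Fin.succ (hBuniq x _ j hex.choose_spec hj)
  have hQsucc : ∀ (x : X) (j : Fin m), Q x = j.succ → x ∈ B j := by
    intro x j hQx
    by_cases hex : ∃ j', x ∈ B j'
    · have h1 : Q x = (hex.choose).succ := by simp only [hQdef]; rw [dif_pos hex]
      have h2 : hex.choose = j := Fin.succ_injective _ (h1.symm.trans hQx)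
      rw [← h2]
      exact hex.choose_spec
    · have h1 : Q x = 0 := by simp only [hQdef]; rw [dif_neg hex]
      exact absurd (h1.symm.trans hQx).symm (Fin.succ_ne_zero j)
  have hQ0iff : ∀ x : X, Q x = 0 ↔ ∀ j, x ∉ B j := by
    intro x
    constructor
    · intro h j hj
      rw [hQB x j hj] at h
      exact (Fin.succ_ne_zero j) h
    · intro h
      simp only [hQdef]
      rw [dif_neg (not_exists.2 h)]
  have hQmeas : Measurable Q := by
    apply measurable_to_countable'
    intro q
    refine Fin.cases ?_ ?_ q
    · have hset : Q ⁻¹' {0} = (⋃ j, B j)ᶜ := by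
        ext x
        simp only [Set.mem_preimage, Set.mem_singleton_iff, Set.mem_compl_iff, Set.mem_iUnion,
          not_exists]
        exact hQ0iff x
      rw [hset]
      exact (MeasurableSet.iUnion fun j => ((hBcomp j).isClosed.measurableSet)).compl
    · intro j
      have hset : Q ⁻¹' {j.succ} = B j := by
        ext x
        simp only [Set.mem_preimage, Set.mem_singleton_iff]
        exact ⟨hQsucc x j, hQB x j⟩
      rw [hset]
      exact (hBcomp j).isClosed.measurableSet
  -- the open cover
  set U : Fin m → Set X := fun j => (⋃ l, ⋃ (_ : l ≠ j), B l)ᶜ with hUdef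
  have hUopen : ∀ j, IsOpen (U j) := by
    intro j
    simp only [hUdef]
    exact (isClosed_iUnion_of_finite fun l => isClosed_iUnion_of_finite fun _ =>
      (hBcomp l).isClosed).isOpen_compl
  have hBU : ∀ (j l : Fin m) (x : X), x ∈ B l → x ∈ U j → l = j := by
    intro j l x hBl hUj
    by_contra hne
    exact hUj (Set.mem_iUnion.2 ⟨l, Set.mem_iUnion.2 ⟨hne, hBl⟩⟩)
  have hUcover : (⋃ j, U j) = Set.univ := by
    rw [Set.eq_univ_iff_forall]
    intro x
    rw [Set.mem_iUnion]
    by_contra hnot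
    push_neg at hnot
    have hmem : ∀ j : Fin m, ∃ l, l ≠ j ∧ x ∈ B l := by
      intro j
      have hj := hnot j
      simp only [hUdef, Set.mem_compl_iff, not_not] at hj
      obtain ⟨l, hl⟩ := Set.mem_iUnion.1 hj
      obtain ⟨hne, hx⟩ := Set.mem_iUnion.1 hl
      exact ⟨l, hne, hx⟩
    obtain ⟨l, hlne, hxl⟩ := hmem ⟨0, hm⟩
    obtain ⟨l', hl'ne, hxl'⟩ := hmem l
    exact hl'ne (hBuniq x l' l hxl' hxl)
  -- small measure of the leftover set
  have hQ0set : Q ⁻¹' {0} = ⋃ j, ((P.1 ⁻¹' {j}) \ B j) := by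
    ext x
    simp only [Set.mem_preimage, Set.mem_singleton_iff, Set.mem_iUnion, Set.mem_diff]
    constructor
    · intro h
      exact ⟨P.1 x, rfl, (hQ0iff x).1 h _⟩
    · rintro ⟨j, hPx, hBx⟩
      refine (hQ0iff x).2 fun l hl => ?_
      have hlj : l = j := by rw [← hBsub l hl, hPx]
      exact hBx (hlj ▸ hl)
  have hμ0 : (μ (Q ⁻¹' {0})).toReal ≤ ε^2 := by
    have h1 : μ (Q ⁻¹' {0}) ≤ ∑ j : Fin m, μ ((P.1 ⁻¹' {j}) \ B j) := by
      rw [hQ0set]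
      exact measure_iUnion_fintype_le μ _
    have h2 : ∑ j : Fin m, μ ((P.1 ⁻¹' {j}) \ B j) ≤ ∑ _j : Fin m, ENNReal.ofReal (ε^2/m) :=
      Finset.sum_le_sum fun j _ => (hBsmall j).le
    have h3 : ∑ _j : Fin m, (ENNReal.ofReal (ε^2/m)) = (m : ℝ≥0∞) * ENNReal.ofReal (ε^2/m) := by
      rw [Finset.sum_const, Finset.card_univ, Fintype.card_fin, nsmul_eq_mul]
    have h5 : (μ (Q ⁻¹' {0})).toReal ≤ ((m:ℝ≥0∞) * ENNReal.ofReal (ε^2/m)).toReal :=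
      ENNReal.toReal_mono (ENNReal.mul_ne_top (ENNReal.natCast_ne_top m) ENNReal.ofReal_ne_top)
        (h1.trans (h2.trans h3.le))
    rw [ENNReal.toReal_mul, ENNReal.toReal_ofReal (by positivity),
      ENNReal.toReal_natCast] at h5
    calc (μ (Q ⁻¹' {0})).toReal ≤ m * (ε^2/m) := h5
      _ = ε^2 := by field_simp
  -- per-n bound
  set c : ℝ := ε * Real.log θ + Real.log (1 + (m:ℝ)/θ) + ε * Real.log ((m:ℝ)*((m:ℝ)+1))
    with hcdef
  have hmain : ∀ n : ℕ, 1 ≤ n → partitionDynEntropy μ ⇑f P.1 n ≤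
      Real.log (coverMinCard (⇑f) U n) + Real.log 2 + n * c := by
    intro n hn
    obtain ⟨S, hScard, hScover⟩ := hcovexists m U hUcover n
    exact per_n_bound μ ⇑f hfm hinv hm P.1 P.2 B hBsub Q hQmeas hQsucc U hBU ε θ hε0 hθ1 hμ0
      n hn (coverMinCard (⇑f) U n) (hcov1 m U hUcover n) S hScard hScover
  -- normalized cover quantity
  set b : ℕ → ℝ := fun n => Real.log (coverMinCard (⇑f) U n) / n with hbdef
  have hb0 : ∀ n : ℕ, 0 ≤ b n := fun n =>
    div_nonneg (Real.log_nonneg (by exact_mod_cast hcov1 m U hUcover n)) (Nat.cast_nonneg n)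
  have hbM : ∀ n : ℕ, b n ≤ max 0 (Real.log m) := by
    intro n
    rcases Nat.eq_zero_or_pos n with rfl | hn
    · have : b 0 = 0 := by simp [hbdef]
      rw [this]
      exact le_max_left _ _
    · have h1 : Real.log (coverMinCard (⇑f) U n) ≤ Real.log ((m ^ n : ℕ)) :=
        log_nat_mono (hcovle m U hUcover n)
      have h2 : Real.log (((m ^ n : ℕ) : ℝ)) = n * Real.log m := by
        push_cast
        exact Real.log_pow _ _
      have hn0 : (0:ℝ) < n := by exact_mod_cast hn
      simp only [hbdef]
      refine le_trans ?_ (le_max_right _ _)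
      rw [div_le_iff₀ hn0]
      rw [h2] at h1
      linarith
  -- eventual comparison
  have hev : ∀ᶠ n in Filter.atTop, partitionDynEntropy μ ⇑f P.1 n / n ≤ b n + δ := by
    rw [Filter.eventually_atTop]
    refine ⟨max 1 (Nat.ceil (4 * Real.log 2 / δ) + 1), fun n hn => ?_⟩
    have hn1 : 1 ≤ n := le_trans (le_max_left _ _) hn
    have hn0 : (0:ℝ) < n := by exact_mod_cast hn1
    have hlog2n : Real.log 2 / n ≤ δ/4 := by
      have hge : (Nat.ceil (4 * Real.log 2 / δ) + 1 : ℕ) ≤ n := le_trans (le_max_right _ _) hn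
      have h1 : 4 * Real.log 2 / δ ≤ n := by
        calc 4 * Real.log 2 / δ ≤ (Nat.ceil (4 * Real.log 2 / δ) : ℝ) := Nat.le_ceil _
          _ ≤ ((Nat.ceil (4 * Real.log 2 / δ) + 1 : ℕ) : ℝ) := by push_cast; linarith
          _ ≤ n := by exact_mod_cast hge
      rw [div_le_div_iff₀ hn0 (by norm_num : (0:ℝ) < 4)]
      rw [div_le_iff₀ hδ] at h1
      linarith
    have h2 := hmain n hn1
    have h3 : partitionDynEntropy μ ⇑f P.1 n / n ≤ b n + Real.log 2 / n + c := by
      have heq : (Real.log (coverMinCard (⇑f) U n) + Real.log 2 + n * c) / n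
          = Real.log (coverMinCard (⇑f) U n) / n + Real.log 2 / n + c := by
        field_simp
      calc partitionDynEntropy μ ⇑f P.1 n / n
          ≤ (Real.log (coverMinCard (⇑f) U n) + Real.log 2 + n * c) / n := by gcongr
        _ = b n + Real.log 2 / n + c := by rw [heq]
    have hc34 : c ≤ 3*δ/4 := by
      rw [hcdef]
      linarith [hεθ, hlog1, hεC]
    linarith [h3, hlog2n, hc34]
  -- liminf comparison over ℝ
  have hbdd_a : Filter.IsBoundedUnder (· ≥ ·) Filter.atTop
      (fun n : ℕ => partitionDynEntropy μ ⇑f P.1 n / n) :=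
    isBoundedUnder_of ⟨0, ha0⟩
  have hcobdd_bδ : Filter.IsCoboundedUnder (· ≥ ·) Filter.atTop (fun n => b n + δ) :=
    (isBoundedUnder_of ⟨max 0 (Real.log m) + δ, fun n => by linarith [hbM n]⟩ :
      Filter.IsBoundedUnder (· ≤ ·) Filter.atTop _).isCoboundedUnder_ge
  have h4 : Filter.atTop.liminf (fun n : ℕ => partitionDynEntropy μ ⇑f P.1 n / n)
      ≤ Filter.atTop.liminf (fun n => b n + δ) :=
    Filter.liminf_le_liminf hev hbdd_a hcobdd_bδ
  have hcobdd_b : Filter.IsCoboundedUnder (· ≥ ·) Filter.atTop b :=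
    (isBoundedUnder_of ⟨max 0 (Real.log m), hbM⟩ :
      Filter.IsBoundedUnder (· ≤ ·) Filter.atTop b).isCoboundedUnder_ge
  have hbdd_b : Filter.IsBoundedUnder (· ≥ ·) Filter.atTop b := isBoundedUnder_of ⟨0, hb0⟩
  have h5 : Filter.atTop.liminf (fun n => b n + δ) = Filter.atTop.liminf b + δ :=
    liminf_add_const Filter.atTop b δ hcobdd_b hbdd_b
  -- conclude in EReal
  calc ((Filter.atTop.liminf (fun n : ℕ => partitionDynEntropy μ ⇑f P.1 n / n) : ℝ) : EReal)
      ≤ ((Filter.atTop.liminf b + δ : ℝ) : EReal) := EReal.coe_le_coe_iff.2 (h4.trans h5.le)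
    _ = ((Filter.atTop.liminf b : ℝ) : EReal) + (δ : EReal) := by rw [EReal.coe_add]
    _ ≤ topEntropy (⇑f) + (δ : EReal) :=
        add_le_add_left (htopb m U hUopen hUcover) _
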